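/- Let m, n ∈ ℕ with m ≥ 3 odd and set ℓ := ⌊m/2⌋. For every p ∈ ZMod m and every A ⊆ E_m^n(p), writing α := |A| / m^(n−1), one has |N_{Z_m^n}(A, E_m^n(p+1))| ≥ |A| · (1 + (1 − α)/√(ℓ³·m·n)), and the same lower bound holds for |N_{Z_m^n}(A, E_m^n(p−1))|. -/

import Mathlib

/-- The discrete torus `Z_m^n`: the graph on `(ZMod m)^n` where two vertices are adjacent
iff they differ by `±1 (mod m)` in exactly one coordinate. -/
def torus (m n : ℕ) : SimpleGraph (Fin n → ZMod m) :=
  SimpleGraph.fromRel fun u v =>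
    ∃ j : Fin n, (u j = v j + 1 ∨ u j = v j - 1) ∧ ∀ i : Fin n, i ≠ j → u i = v i

/-- A set of vertices is independent if its vertices are pairwise non-adjacent. -/
def IsIndep {V : Type*} (G : SimpleGraph V) (s : Set V) : Prop :=
  s.Pairwise fun u v => ¬ G.Adj u v

/-- `N_G(X) := (⋃ x ∈ X, N_G(x)) \ X`. -/
def nbhd {V : Type*} (G : SimpleGraph V) (X : Set V) : Set V :=
  (⋃ x ∈ X, G.neighborSet x) \ X

/-- `N_G(X, Y) := N_G(X) ∩ Y`. -/
def nbhdIn {V : Type*} (G : SimpleGraph V) (X Y : Set V) : Set V :=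
  nbhd G X ∩ Y

/-- `E_m^n(p)`: the vertices of `Z_m^n` whose coordinate sum is `p` modulo `m`. -/
def Eclass (m n : ℕ) (p : ZMod m) : Set (Fin n → ZMod m) :=
  {v | ∑ i, v i = p}

/-- A maximum independent set: an independent set of the largest possible cardinality. -/
def MaxIndep {V : Type*} (G : SimpleGraph V) (s : Set V) : Prop :=
  IsIndep G s ∧ ∀ t : Set V, IsIndep G t → t.ncard ≤ s.ncard


open Finset

lemma arith_key (k : ℕ) (m : ℕ) (hk : 1 ≤ k) (hm : 3 ≤ m) (L M X G : ℝ)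
    (hL : 1 ≤ L) (hm4 : (m : ℝ) ≤ 4 * L ^ 3) (hM : 0 < M) (hG : 0 ≤ G)
    (h1 : (1 / Real.sqrt (L ^ 3 * m * k)) *
      ((X - X ^ 2 / ((m : ℝ) * M)) - (m : ℝ) * G ^ 2 / (2 * M)) ≤ G) :
    (1 / Real.sqrt (L ^ 3 * m * (k + 1))) * (X - X ^ 2 / ((m : ℝ) * M)) ≤ G := by
  have hm0 : (0:ℝ) < m := by positivity
  have hL0 : (0:ℝ) < L := by linarith
  have hk0 : (1:ℝ) ≤ (k:ℝ) := by exact_mod_cast hk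
  set T : ℝ := X - X ^ 2 / ((m : ℝ) * M) with hT
  have hT4 : 4 * T ≤ (m : ℝ) * M := by
    rw [hT]
    have expand : 4 * (X - X ^ 2 / ((m:ℝ) * M)) * ((m:ℝ) * M) = 4 * X * ((m:ℝ)*M) - 4 * X^2 := by
      field_simp
    nlinarith [sq_nonneg ((m:ℝ)*M - 2*X), mul_pos hm0 hM]
  set a : ℝ := Real.sqrt (L ^ 3 * m * k) with haa
  set b : ℝ := Real.sqrt (L ^ 3 * m * (k + 1)) with hbb
  have ha0 : 0 < a := Real.sqrt_pos.2 (by positivity)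
  have hb0 : 0 < b := Real.sqrt_pos.2 (by positivity)
  have ha2 : a ^ 2 = L ^ 3 * m * k := Real.sq_sqrt (by positivity)
  have hb2 : b ^ 2 = L ^ 3 * m * (k + 1) := Real.sq_sqrt (by positivity)
  have hab : a ≤ b := Real.sqrt_le_sqrt (by nlinarith)
  have P4 : (m:ℝ) * m ≤ 4 * (b ^ 2 - a ^ 2) := by
    have h : b ^ 2 - a ^ 2 = L ^ 3 * m := by rw [ha2, hb2]; ring
    rw [h]; nlinarith
  clear ha2 hb2 haa hbb hT
  rw [one_div, inv_mul_le_iff₀ ha0] at h1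
  by_contra hcon
  push_neg at hcon
  rw [one_div] at hcon
  have P2 : b * G < T := by
    have := (mul_lt_mul_iff_right₀ hb0).2 hcon
    rwa [mul_inv_cancel_left₀ (ne_of_gt hb0)] at this
  have hG0 : 0 < G := by
    rcases lt_or_eq_of_le hG with h | h
    · exact h
    · exfalso
      rw [← h] at h1 P2
      rw [mul_zero] at P2 h1
      have h0 : (m:ℝ) * 0 ^ 2 / (2 * M) = 0 := by norm_num
      rw [h0, sub_zero] at h1
      linarith
  have hQ : 2 * M * ((m:ℝ) * G ^ 2 / (2 * M)) = m * G ^ 2 := by field_simp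
  have P1 : 2 * M * T ≤ 2 * M * (a * G) + (m:ℝ) * G ^ 2 := by
    have h' := mul_le_mul_of_nonneg_left h1 (by positivity : (0:ℝ) ≤ 2 * M)
    rw [mul_sub, hQ] at h'
    linarith
  have q1 := mul_lt_mul_of_pos_left P2 (show (0:ℝ) < 2 * M * b by positivity)
  have q2 := mul_le_mul_of_nonneg_left P1 hb0.le
  have q3 := mul_lt_mul_of_pos_left P2 (show (0:ℝ) < (m:ℝ) * G by positivity)
  have q4 := mul_le_mul_of_nonneg_left hT4 (show (0:ℝ) ≤ (m:ℝ) * G by positivity)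
  have q5 := mul_le_mul_of_nonneg_left P4 (show (0:ℝ) ≤ M * G by positivity)
  have q6 := mul_nonneg (mul_nonneg hM.le hG) (sq_nonneg (b - a))
  nlinarith [q1, q2, q3, q4, q5, q6]

/-- reindexing a sum over `ZMod m` by a shift over `range m` -/

lemma sum_shift {m : ℕ} [NeZero m] (h : ZMod m → ℝ) (c : ZMod m) :
    ∑ k ∈ Finset.range m, h (c + (k : ZMod m)) = ∑ w : ZMod m, h w := by
  refine Finset.sum_nbij' (fun k => c + (k : ZMod m)) (fun w => ((w - c).val : ℕ))
    (fun k hk => Finset.mem_univ _) (fun w hw => Finset.mem_range.2 (ZMod.val_lt _))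
    (fun k hk => ?_) (fun w hw => ?_) (fun k hk => rfl)
  · show ((c + (k : ZMod m)) - c).val = k
    rw [add_sub_cancel_left, ZMod.val_natCast_of_lt (Finset.mem_range.1 hk)]
  · show c + (((w - c).val : ℕ) : ZMod m) = w
    rw [ZMod.natCast_rightInverse (w - c), add_sub_cancel]

/-- telescoping -/

lemma telescope {m : ℕ} (f : ZMod m → ℝ) (u : ZMod m) (t : ℕ) :
    f u - f (u + (t : ZMod m)) = ∑ k ∈ Finset.range t, (f (u + (k : ZMod m)) - f (u + (k : ZMod m) + 1)) := by
  induction t with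
  | zero => simp
  | succ t ih =>
      rw [Finset.sum_range_succ, ← ih]
      push_cast
      ring_nf

lemma m_le_4L3 {m : ℕ} (hm : 3 ≤ m) (hmo : Odd m) : (m : ℝ) ≤ 4 * ((m / 2 : ℕ) : ℝ) ^ 3 := by
  obtain ⟨k, hk⟩ := hmo
  have hk1 : 1 ≤ k := by omega
  have h2 : m / 2 = k := by omega
  have h3 : k ≤ k ^ 3 := Nat.le_self_pow (by norm_num) k
  have : m ≤ 4 * (m/2)^3 := by rw [h2]; omega
  exact_mod_cast this

lemma sq_expand {ι : Type*} [Fintype ι] (f : ι → ℝ) (u : ι) :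
    ∑ v, (f u - f v)^2 =
      (Fintype.card ι : ℝ)*(f u)^2 - (2*(∑ v, f v))*(f u) + ∑ v, (f v)^2 := by
  have h : ∀ v, (f u - f v)^2 = (f u)^2 - (2*(f u))*(f v) + (f v)^2 := fun v => by ring
  rw [Finset.sum_congr rfl (fun v _ => h v), Finset.sum_add_distrib, Finset.sum_sub_distrib,
    Finset.sum_const, ← Finset.mul_sum, card_univ, nsmul_eq_mul]
  ring

lemma var_bound {ι : Type*} [Fintype ι] (f : ι → ℝ) (G : ℝ)
    (h : ∀ u v, f u - f v ≤ G) :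
    2*(Fintype.card ι : ℝ) * (∑ w, (f w)^2) ≤ 2*(∑ w, f w)^2 + (Fintype.card ι : ℝ)^2 * G^2 := by
  have hsq : ∀ u v : ι, (f u - f v)^2 ≤ G^2 := fun u v => sq_le_sq' (by linarith [h v u]) (h u v)
  have hle : ∑ u, ∑ v, (f u - f v)^2 ≤ ∑ _u : ι, ∑ _v : ι, G^2 :=
    Finset.sum_le_sum (fun u _ => Finset.sum_le_sum (fun v _ => hsq u v))
  have hconst : ∑ _u : ι, ∑ _v : ι, G^2 = (Fintype.card ι : ℝ)^2 * G^2 := by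
    rw [Finset.sum_const, Finset.sum_const, card_univ, nsmul_eq_mul, nsmul_eq_mul]
    ring
  have hid : ∑ u, ∑ v, (f u - f v)^2
      = 2*(Fintype.card ι:ℝ)*(∑ w, (f w)^2) - 2*(∑ w, f w)^2 := by
    rw [Finset.sum_congr rfl (fun u _ => sq_expand f u), Finset.sum_add_distrib,
      Finset.sum_sub_distrib, ← Finset.mul_sum, ← Finset.mul_sum, Finset.sum_const,
      card_univ, nsmul_eq_mul]
    ring
  rw [hid] at hle
  rw [hconst] at hle
  linarith

lemma slice_card {m n : ℕ} [NeZero m] (S : Finset (Fin (n+1) → ZMod m)) :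
    S.card = ∑ w : ZMod m, ((S.filter (fun v => v 0 = w)).image Fin.tail).card := by
  rw [Finset.card_eq_sum_card_fiberwise (f := fun v => v 0) (t := univ) (fun v _ => mem_univ _)]
  refine Finset.sum_congr rfl (fun w _ => ?_)
  rw [Finset.card_image_of_injOn ?_]
  intro u hu v hv htail
  simp only [coe_filter, Set.mem_setOf_eq, mem_coe] at hu hv
  funext i
  refine Fin.cases ?_ (fun i => ?_) i
  · rw [hu.2, hv.2]
  · exact congrFun htail i

lemma core (m : ℕ) (hm : 3 ≤ m) (hmo : Odd m) :
    ∀ (n : ℕ) (p : ZMod m) (A : Finset (Fin (n+1) → ZMod m)),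
      (∀ v ∈ A, ∑ i, v i = p) →
      (A.card : ℝ) * (1 + (1 - (A.card : ℝ) / (m : ℝ) ^ n) /
          Real.sqrt (((m / 2 : ℕ) : ℝ) ^ 3 * m * (n + 1))) ≤
        ((Finset.univ.biUnion
          (fun j : Fin (n+1) => A.image (· + Pi.single j (1 : ZMod m)))).card : ℝ) := by
  haveI : NeZero m := ⟨by omega⟩
  intro n
  induction n with
  | zero =>
      intro p A hA
      rcases A.eq_empty_or_nonempty with rfl | ⟨v, hv⟩
      · simp
      · have hall : ∀ u ∈ A, u = v := by
          intro u hu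
          funext i
          have h1 : u 0 = p := by have := hA u hu; rwa [Fin.sum_univ_one] at this
          have h2 : v 0 = p := by have := hA v hv; rwa [Fin.sum_univ_one] at this
          have : i = 0 := Fin.ext (by omega)
          rw [this, h1, h2]
        have hcard : A.card = 1 :=
          Finset.card_eq_one.2 ⟨v, Finset.eq_singleton_iff_unique_mem.2 ⟨hv, hall⟩⟩
        have hmem : v + Pi.single (0 : Fin 1) (1 : ZMod m) ∈
            Finset.univ.biUnion
              (fun j : Fin 1 => A.image (· + Pi.single j (1 : ZMod m))) :=
          Finset.mem_biUnion.2 ⟨0, mem_univ _, Finset.mem_image_of_mem _ hv⟩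
        have hc1 : 1 ≤ (Finset.univ.biUnion
              (fun j : Fin 1 => A.image (· + Pi.single j (1 : ZMod m)))).card :=
          Finset.card_pos.2 ⟨_, hmem⟩
        have hc1' : (1:ℝ) ≤ ((Finset.univ.biUnion
              (fun j : Fin 1 => A.image (· + Pi.single j (1 : ZMod m)))).card : ℝ) := by
          exact_mod_cast hc1
        have hL : ((1:ℕ):ℝ) * (1 + (1 - ((1:ℕ):ℝ) / (m : ℝ) ^ 0) /
            Real.sqrt (((m / 2 : ℕ) : ℝ) ^ 3 * m * (((0:ℕ):ℝ) + 1))) = 1 := by norm_num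
        rw [hcard, hL]
        exact hc1'
  | succ n ih =>
      intro p A hA
      classical
      set L : ℝ := ((m / 2 : ℕ) : ℝ) with hLdef
      set M : ℝ := (m : ℝ) ^ n with hMdef
      set B : Finset (Fin (n+2) → ZMod m) := Finset.univ.biUnion
          (fun j : Fin (n+2) => A.image (· + Pi.single j (1 : ZMod m))) with hBdef
      set Aw : ZMod m → Finset (Fin (n+1) → ZMod m) :=
          (fun w => (A.filter (fun v => v 0 = w)).image Fin.tail) with hAwdef
      set Bw : ZMod m → Finset (Fin (n+1) → ZMod m) :=
          (fun w => (B.filter (fun v => v 0 = w)).image Fin.tail) with hBwdef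
      -- layer condition for slices
      have hAw_layer : ∀ w, ∀ t ∈ Aw w, ∑ i, t i = p - w := by
        intro w t ht
        rw [hAwdef] at ht
        obtain ⟨v, hvf, rfl⟩ := Finset.mem_image.1 ht
        obtain ⟨hvA, hv0⟩ := Finset.mem_filter.1 hvf
        have hsum := hA v hvA
        rw [Fin.sum_univ_succ, hv0] at hsum
        rw [eq_sub_iff_add_eq']
        exact hsum
      -- slice subset facts
      have hsub1 : ∀ w : ZMod m, Aw (w - 1) ⊆ Bw w := by
        intro w s hs
        obtain ⟨v, hvf, rfl⟩ := Finset.mem_image.1 hs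
        obtain ⟨hvA, hv0⟩ := Finset.mem_filter.1 hvf
        have huB : v + Pi.single (0 : Fin (n+2)) (1 : ZMod m) ∈ B :=
          Finset.mem_biUnion.2 ⟨0, mem_univ _, Finset.mem_image_of_mem _ hvA⟩
        refine Finset.mem_image.2 ⟨v + Pi.single (0 : Fin (n+2)) (1 : ZMod m), Finset.mem_filter.2 ⟨huB, ?_⟩, ?_⟩
        · rw [Pi.add_apply, hv0, Pi.single_eq_same, sub_add_cancel]
        · funext i
          simp only [Fin.tail, Pi.add_apply]
          rw [Pi.single_eq_of_ne (Fin.succ_ne_zero i), add_zero]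
      have hsub2 : ∀ w : ZMod m, (Finset.univ.biUnion
          (fun j : Fin (n+1) => (Aw w).image (· + Pi.single j (1 : ZMod m)))) ⊆ Bw w := by
        intro w s hs
        obtain ⟨j, _, hsj⟩ := Finset.mem_biUnion.1 hs
        obtain ⟨t, htA, rfl⟩ := Finset.mem_image.1 hsj
        obtain ⟨v, hvf, rfl⟩ := Finset.mem_image.1 htA
        obtain ⟨hvA, hv0⟩ := Finset.mem_filter.1 hvf
        have huB : v + Pi.single j.succ (1 : ZMod m) ∈ B :=
          Finset.mem_biUnion.2 ⟨j.succ, mem_univ _, Finset.mem_image_of_mem _ hvA⟩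
        refine Finset.mem_image.2 ⟨v + Pi.single j.succ (1 : ZMod m), Finset.mem_filter.2 ⟨huB, ?_⟩, ?_⟩
        · rw [Pi.add_apply, Pi.single_eq_of_ne (Fin.succ_ne_zero j).symm, add_zero, hv0]
        · funext i
          simp only [Fin.tail, Pi.add_apply]
          congr 1
          by_cases h : i = j
          · subst h; rw [Pi.single_eq_same, Pi.single_eq_same]
          · rw [Pi.single_eq_of_ne h, Pi.single_eq_of_ne (fun hh => h (Fin.succ_injective _ hh))]
      -- cardinalities
      have h_sliceA : A.card = ∑ w : ZMod m, (Aw w).card := slice_card A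
      have h_sliceB : B.card = ∑ w : ZMod m, (Bw w).card := slice_card B
      have hxb : ∀ w, (Aw w).card ≤ (Bw w).card := by
        intro w
        have h1 : (Aw w).card = ((Aw w).image (· + Pi.single (0 : Fin (n+1)) (1:ZMod m))).card :=
          (Finset.card_image_of_injective _ (add_left_injective _)).symm
        rw [h1]
        exact Finset.card_le_card ((Finset.subset_biUnion_of_mem _ (mem_univ 0)).trans (hsub2 w))
      have hprev : ∀ w, (Aw (w - 1)).card ≤ (Bw w).card :=
        fun w => Finset.card_le_card (hsub1 w)
      have hIH : ∀ w, ((Aw w).card : ℝ) * (1 + (1 - ((Aw w).card : ℝ) / M) /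
          Real.sqrt (L ^ 3 * m * (n + 1))) ≤ ((Bw w).card : ℝ) := by
        intro w
        refine le_trans (ih (p - w) (Aw w) (hAw_layer w)) ?_
        exact_mod_cast Finset.card_le_card (hsub2 w)
      -- real-number abbreviations
      set X : ℝ := ((A.card : ℕ) : ℝ) with hXdef
      set BB : ℝ := ((B.card : ℕ) : ℝ) with hBBdef
      set G : ℝ := BB - X with hGdef
      set S2 : ℝ := ∑ w : ZMod m, (((Aw w).card : ℝ))^2 with hS2def
      have hmR : (0:ℝ) < m := by exact_mod_cast (by omega : 0 < m)
      have hM0 : (0:ℝ) < M := by rw [hMdef]; exact pow_pos hmR n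
      have hL1 : (1:ℝ) ≤ L := by
        rw [hLdef]; exact_mod_cast (by omega : 1 ≤ m / 2)
      have hm4L : (m:ℝ) ≤ 4 * L^3 := by rw [hLdef]; exact m_le_4L3 hm hmo
      have hXf : X = ∑ w : ZMod m, ((Aw w).card : ℝ) := by
        rw [hXdef, h_sliceA]; push_cast; rfl
      have hBb : BB = ∑ w : ZMod m, ((Bw w).card : ℝ) := by
        rw [hBBdef, h_sliceB]; push_cast; rfl
      have hfb : ∀ w, ((Aw w).card : ℝ) ≤ ((Bw w).card : ℝ) :=
        fun w => by exact_mod_cast hxb w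
      have hGsum : G = ∑ w : ZMod m, (((Bw w).card : ℝ) - ((Aw w).card : ℝ)) := by
        rw [hGdef, hXf, hBb, Finset.sum_sub_distrib]
      have hGnn : 0 ≤ G := by
        rw [hGsum]; exact Finset.sum_nonneg (fun w _ => by linarith [hfb w])
      -- pairwise bound : differences of slice sizes are at most G
      have hpair : ∀ u v : ZMod m, ((Aw u).card : ℝ) - ((Aw v).card : ℝ) ≤ G := by
        intro u v
        have htele := telescope (fun w => ((Aw w).card : ℝ)) u ((v - u).val)
        have huv : u + ((((v - u).val : ℕ)) : ZMod m) = v := by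
          rw [ZMod.natCast_rightInverse (v - u), add_sub_cancel]
        rw [huv] at htele
        rw [htele]
        have hterm : ∀ k : ℕ, ((Aw (u + (k : ZMod m))).card : ℝ) - ((Aw (u + (k : ZMod m) + 1)).card : ℝ)
            ≤ ((Bw (u + (k : ZMod m) + 1)).card : ℝ) - ((Aw (u + (k : ZMod m) + 1)).card : ℝ) := by
          intro k
          have h1 := hprev (u + (k : ZMod m) + 1)
          have h2 : (u + (k : ZMod m) + 1) - 1 = u + (k : ZMod m) := by ring
          rw [h2] at h1
          have h3 : ((Aw (u + (k:ZMod m))).card : ℝ) ≤ ((Bw (u + (k:ZMod m) + 1)).card : ℝ) := by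
            exact_mod_cast h1
          linarith
        calc ∑ k ∈ Finset.range ((v-u).val),
              (((Aw (u + (k:ZMod m))).card : ℝ) - ((Aw (u + (k:ZMod m) + 1)).card : ℝ))
            ≤ ∑ k ∈ Finset.range ((v-u).val),
              (((Bw (u + (k:ZMod m) + 1)).card : ℝ) - ((Aw (u + (k:ZMod m) + 1)).card : ℝ)) :=
              Finset.sum_le_sum (fun k _ => hterm k)
          _ ≤ ∑ k ∈ Finset.range m,
              (((Bw (u + (k:ZMod m) + 1)).card : ℝ) - ((Aw (u + (k:ZMod m) + 1)).card : ℝ)) := by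
              refine Finset.sum_le_sum_of_subset_of_nonneg
                (Finset.range_subset_range.2 (le_of_lt (ZMod.val_lt _))) ?_
              intro k _ _
              linarith [hfb (u + (k:ZMod m) + 1)]
          _ = ∑ k ∈ Finset.range m,
              (((Bw ((u+1) + (k:ZMod m))).card : ℝ) - ((Aw ((u+1) + (k:ZMod m))).card : ℝ)) := by
              refine Finset.sum_congr rfl (fun k _ => ?_)
              rw [show u + (k:ZMod m) + 1 = (u+1) + (k:ZMod m) by ring]
          _ = ∑ w : ZMod m, (((Bw w).card : ℝ) - ((Aw w).card : ℝ)) :=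
              sum_shift (fun w => ((Bw w).card : ℝ) - ((Aw w).card : ℝ)) (u+1)
          _ = G := hGsum.symm
      -- variance bound
      have hvar := var_bound (fun w : ZMod m => ((Aw w).card : ℝ)) G hpair
      rw [ZMod.card] at hvar
      rw [← hXf, ← hS2def] at hvar
      have hS2le : S2 ≤ X^2/(m:ℝ) + (m:ℝ)*G^2/2 := by
        rw [div_add_div _ _ (ne_of_gt hmR) (two_ne_zero), le_div_iff₀ (by positivity)]
        nlinarith [hvar]
      have hfrac : S2 / M ≤ X^2/((m:ℝ)*M) + (m:ℝ)*G^2/(2*M) := by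
        calc S2/M ≤ (X^2/(m:ℝ) + (m:ℝ)*G^2/2)/M := by
              exact div_le_div_of_nonneg_right hS2le hM0.le
          _ = X^2/((m:ℝ)*M) + (m:ℝ)*G^2/(2*M) := by rw [add_div, div_div, div_div]
      -- summing the induction hypothesis
      have hexp : ∀ w : ZMod m, (((Aw w).card:ℝ)) * (1 + (1 - ((Aw w).card:ℝ)/M) /
            Real.sqrt (L ^ 3 * m * (n + 1)))
          = ((Aw w).card:ℝ) + (1/Real.sqrt (L ^ 3 * m * (n + 1))) * (((Aw w).card:ℝ))
            - ((1/Real.sqrt (L ^ 3 * m * (n + 1)))/M) * (((Aw w).card:ℝ))^2 := fun w => by ring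
      have hIHsum : X + (1/Real.sqrt (L ^ 3 * m * (n + 1))) * X
          - ((1/Real.sqrt (L ^ 3 * m * (n + 1)))/M) * S2 ≤ BB := by
        have hsum : ∑ w : ZMod m, (((Aw w).card:ℝ)
              + (1/Real.sqrt (L ^ 3 * m * (n + 1))) * (((Aw w).card:ℝ))
              - ((1/Real.sqrt (L ^ 3 * m * (n + 1)))/M) * (((Aw w).card:ℝ))^2)
            ≤ ∑ w : ZMod m, ((Bw w).card:ℝ) := by
          refine Finset.sum_le_sum (fun w _ => ?_)
          rw [← hexp w]
          exact hIH w
        rw [Finset.sum_sub_distrib, Finset.sum_add_distrib, ← Finset.mul_sum, ← Finset.mul_sum,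
          ← hXf, ← hS2def, ← hBb] at hsum
        exact hsum
      have hdG : (1/Real.sqrt (L ^ 3 * m * (n + 1))) *
          ((X - X^2/((m:ℝ)*M)) - (m:ℝ)*G^2/(2*M)) ≤ G := by
        have hd0 : (0:ℝ) ≤ 1/Real.sqrt (L ^ 3 * m * (n + 1)) := by positivity
        have hmono : ((X - X^2/((m:ℝ)*M)) - (m:ℝ)*G^2/(2*M)) ≤ X - S2/M := by linarith [hfrac]
        have h2 := mul_le_mul_of_nonneg_left hmono hd0
        have h3 : (1/Real.sqrt (L ^ 3 * m * (n + 1))) * (X - S2/M)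
            = (1/Real.sqrt (L ^ 3 * m * (n + 1))) * X
              - ((1/Real.sqrt (L ^ 3 * m * (n + 1)))/M) * S2 := by ring
        rw [h3] at h2
        rw [hGdef]
        linarith [hIHsum]
      have hdG' : (1/Real.sqrt (L ^ 3 * m * ((n+1:ℕ) : ℝ))) *
          ((X - X^2/((m:ℝ)*M)) - (m:ℝ)*G^2/(2*M)) ≤ G := by
        have : (((n+1:ℕ)) : ℝ) = (n:ℝ) + 1 := by push_cast; ring
        rw [this]
        exact hdG
      have harith := arith_key (n+1) m (by omega) hm L M X G hL1 hm4L hM0 hGnn hdG'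
      have hpow : (m:ℝ)^(n+1) = (m:ℝ)*M := by rw [hMdef, pow_succ]; ring
      have hfin : X * (1 + (1 - X/((m:ℝ)^(n+1))) /
            Real.sqrt (L ^ 3 * m * (((n+1:ℕ):ℝ) + 1)))
          = X + (1/Real.sqrt (L ^ 3 * m * (((n+1:ℕ):ℝ) + 1))) * (X - X^2/((m:ℝ)*M)) := by
        rw [hpow]; ring
      rw [hfin]
      linarith [harith]

lemma sum_add_single {m n : ℕ} (v : Fin n → ZMod m) (j : Fin n) (c : ZMod m) :
    ∑ i, (v + Pi.single j c : Fin n → ZMod m) i = (∑ i, v i) + c := by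
  simp only [Pi.add_apply]
  rw [Finset.sum_add_distrib, Finset.sum_pi_single']
  simp

lemma eq_add_single {m n : ℕ} (a x : Fin n → ZMod m) (j : Fin n) (c : ZMod m)
    (hj : x j = a j + c) (ho : ∀ i, i ≠ j → x i = a i) :
    x = a + Pi.single j c := by
  funext i
  by_cases h : i = j
  · subst h; rw [Pi.add_apply, Pi.single_eq_same]; exact hj
  · rw [Pi.add_apply, Pi.single_eq_of_ne h, add_zero]; exact ho i h

lemma char_nbhd {m n : ℕ} (hm : 3 ≤ m) (p : ZMod m) (A : Set (Fin n → ZMod m))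
    (hA : A ⊆ Eclass m n p) (ε : ZMod m) (hε : ε = 1 ∨ ε = -1) :
    nbhdIn (torus m n) A (Eclass m n (p + ε)) =
      ⋃ j : Fin n, (· + Pi.single j ε) '' A := by
  haveI : NeZero m := ⟨by omega⟩
  have h1ne : (1 : ZMod m) ≠ 0 := by
    intro h
    have h' : ((1:ℕ) : ZMod m) = 0 := by exact_mod_cast h
    rw [ZMod.natCast_eq_zero_iff] at h'
    have := Nat.le_of_dvd one_pos h'
    omega
  have hε0 : ε ≠ 0 := by
    rcases hε with rfl | rfl
    · exact h1ne
    · exact neg_ne_zero.2 h1ne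
  ext x
  constructor
  · rintro ⟨⟨hxN, hxA⟩, hxE⟩
    obtain ⟨a, haA, hadj⟩ := Set.mem_iUnion₂.1 hxN
    rw [SimpleGraph.mem_neighborSet] at hadj
    rw [torus, SimpleGraph.fromRel_adj] at hadj
    obtain ⟨hne, hrel⟩ := hadj
    have hsum_a : ∑ i, a i = p := hA haA
    have hsum_x : ∑ i, x i = p + ε := hxE
    have main : ∀ (j : Fin n) (c : ZMod m), x = a + Pi.single j c →
        x ∈ ⋃ j : Fin n, (· + Pi.single j ε) '' A := by
      intro j c hxc
      have hc : c = ε := by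
        have h2 := hsum_x
        rw [hxc, sum_add_single, hsum_a] at h2
        exact add_left_cancel h2
      rw [hc] at hxc
      exact Set.mem_iUnion.2 ⟨j, ⟨a, haA, hxc.symm⟩⟩
    rcases hrel with ⟨j, hj, ho⟩ | ⟨j, hj, ho⟩
    · rcases hj with hj | hj
      · -- a j = x j + 1  ⇒ x j = a j - 1
        refine main j (-1) (eq_add_single a x j (-1) ?_ (fun i hi => (ho i hi).symm))
        rw [hj]; ring
      · -- a j = x j - 1 ⇒ x j = a j + 1
        refine main j 1 (eq_add_single a x j 1 ?_ (fun i hi => (ho i hi).symm))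
        rw [hj]; ring
    · rcases hj with hj | hj
      · refine main j 1 (eq_add_single a x j 1 hj ho)
      · refine main j (-1) (eq_add_single a x j (-1) (by rw [hj]; ring) ho)
  · intro hx
    obtain ⟨j, a, haA, rfl⟩ := Set.mem_iUnion.1 hx
    have hsum_a : ∑ i, a i = p := hA haA
    have hsum_x : ∑ i, (a + Pi.single j ε : Fin n → ZMod m) i = p + ε := by rw [sum_add_single, hsum_a]
    have hxE : (a + Pi.single j ε) ∈ Eclass m n (p + ε) := hsum_x
    have hxA : (a + Pi.single j ε) ∉ A := by
      intro hmem
      have := hA hmem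
      have h2 : p + ε = p := by rw [← hsum_x, this]
      exact hε0 (by rwa [add_eq_left] at h2)
    have hne : a ≠ a + Pi.single j ε := by
      intro heq
      have := congrFun heq j
      rw [Pi.add_apply, Pi.single_eq_same] at this
      exact hε0 (by rwa [left_eq_add] at this)
    have hadj : (torus m n).Adj a (a + Pi.single j ε) := by
      rw [torus, SimpleGraph.fromRel_adj]
      refine ⟨hne, Or.inl ⟨j, ?_, fun i hi => ?_⟩⟩
      · rcases hε with rfl | rfl
        · right
          rw [Pi.add_apply, Pi.single_eq_same]; ring
        · left
          rw [Pi.add_apply, Pi.single_eq_same]; ring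
      · rw [Pi.add_apply, Pi.single_eq_of_ne hi, add_zero]
    refine ⟨⟨Set.mem_iUnion₂.2 ⟨a, haA, ?_⟩, hxA⟩, hxE⟩
    rwa [SimpleGraph.mem_neighborSet]

lemma single_neg' {m n : ℕ} (j : Fin n) :
    Pi.single j (-1 : ZMod m) = (- Pi.single j (1 : ZMod m) : Fin n → ZMod m) := by
  funext i
  by_cases h : i = j
  · subst h; rw [Pi.single_eq_same, Pi.neg_apply, Pi.single_eq_same]
  · rw [Pi.single_eq_of_ne h, Pi.neg_apply, Pi.single_eq_of_ne h, neg_zero]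

/-- Isoperimetric inequality: for `A ⊆ E_m^n(p)` with `α := |A|/m^(n-1)`, the neighbourhood
of `A` in `E_m^n(p ± 1)` has size at least `|A| · (1 + (1-α)/√(ℓ³mn))` where `ℓ = ⌊m/2⌋`. -/
theorem stmt_2 (m n : ℕ) (hm : 3 ≤ m) (hmo : Odd m) (hn : 1 ≤ n) (p : ZMod m)
    (A : Set (Fin n → ZMod m)) (hA : A ⊆ Eclass m n p) :
    (A.ncard : ℝ) * (1 + (1 - (A.ncard : ℝ) / (m : ℝ) ^ (n - 1)) /
        Real.sqrt (((m / 2 : ℕ) : ℝ) ^ 3 * m * n)) ≤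
      ((nbhdIn (torus m n) A (Eclass m n (p + 1))).ncard : ℝ) ∧
    (A.ncard : ℝ) * (1 + (1 - (A.ncard : ℝ) / (m : ℝ) ^ (n - 1)) /
        Real.sqrt (((m / 2 : ℕ) : ℝ) ^ 3 * m * n)) ≤
      ((nbhdIn (torus m n) A (Eclass m n (p - 1))).ncard : ℝ) := by
  haveI : NeZero m := ⟨by omega⟩
  obtain ⟨k, rfl⟩ : ∃ k, n = k + 1 := ⟨n - 1, by omega⟩
  classical
  have hfin : A.Finite := Set.toFinite A
  set F : Finset (Fin (k+1) → ZMod m) := hfin.toFinset with hFdef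
  have hFA : (↑F : Set (Fin (k+1) → ZMod m)) = A := hfin.coe_toFinset
  have hncard : A.ncard = F.card := by rw [← hFA, Set.ncard_coe_finset]
  have hFsum : ∀ v ∈ F, ∑ i, v i = p := by
    intro v hv
    have hv' : v ∈ A := by rwa [hfin.mem_toFinset] at hv
    exact hA hv'
  -- plus side
  have hchar1 := char_nbhd hm p A hA 1 (Or.inl rfl)
  have hset1 : (⋃ j : Fin (k+1), (· + Pi.single j (1 : ZMod m)) '' A)
      = ↑(Finset.univ.biUnion
          (fun j : Fin (k+1) => F.image (· + Pi.single j (1 : ZMod m)))) := by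
    ext x
    simp only [Set.mem_iUnion, Set.mem_image, Finset.coe_biUnion, Finset.coe_univ,
      Finset.mem_coe, Finset.mem_biUnion, Finset.mem_univ, true_and,
      Finset.mem_image, Set.mem_univ, Set.iUnion_true]
    constructor
    · rintro ⟨j, a, ha, hEq⟩
      exact ⟨j, a, hfin.mem_toFinset.2 ha, hEq⟩
    · rintro ⟨j, a, ha, hEq⟩
      exact ⟨j, a, hfin.mem_toFinset.1 ha, hEq⟩
  have hplus := core m hm hmo k p F hFsum
  have hncard1 : (nbhdIn (torus m (k+1)) A (Eclass m (k+1) (p+1))).ncard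
      = (Finset.univ.biUnion
          (fun j : Fin (k+1) => F.image (· + Pi.single j (1 : ZMod m)))).card := by
    rw [hchar1, hset1, Set.ncard_coe_finset]
  -- minus side
  have hchar2 := char_nbhd hm p A hA (-1) (Or.inr rfl)
  have hpm : p + (-1) = p - 1 := by ring
  rw [hpm] at hchar2
  set F' : Finset (Fin (k+1) → ZMod m) := F.image (fun v => -v) with hF'def
  have hcardF' : F'.card = F.card := Finset.card_image_of_injective _ neg_injective
  have hF'sum : ∀ v ∈ F', ∑ i, v i = -p := by
    intro v hv
    obtain ⟨u, hu, rfl⟩ := Finset.mem_image.1 hv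
    have hu' := hFsum u hu
    rw [← hu']
    simp [Pi.neg_apply]
  have hminus := core m hm hmo k (-p) F' hF'sum
  have hsetneg : (fun v : Fin (k+1) → ZMod m => -v) ''
        (⋃ j : Fin (k+1), (· + Pi.single j (-1 : ZMod m)) '' A)
      = ⋃ j : Fin (k+1), (· + Pi.single j (1 : ZMod m)) ''
          ((fun v : Fin (k+1) → ZMod m => -v) '' A) := by
    rw [Set.image_iUnion]
    refine Set.iUnion_congr (fun j => ?_)
    rw [Set.image_image, Set.image_image]
    refine Set.image_congr (fun a _ => ?_)
    rw [single_neg', neg_add, neg_neg]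
  have hset2 : (⋃ j : Fin (k+1), (· + Pi.single j (1 : ZMod m)) ''
        ((fun v : Fin (k+1) → ZMod m => -v) '' A))
      = ↑(Finset.univ.biUnion
          (fun j : Fin (k+1) => F'.image (· + Pi.single j (1 : ZMod m)))) := by
    ext x
    simp only [Set.mem_iUnion, Set.mem_image, Finset.coe_biUnion, Finset.coe_univ,
      Finset.mem_coe, Finset.mem_biUnion, Finset.mem_univ, true_and,
      Finset.mem_image, Set.mem_univ, Set.iUnion_true, hF'def]
    constructor
    · rintro ⟨j, a, ⟨u, hu, rfl⟩, hEq⟩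
      exact ⟨j, -u, ⟨u, hfin.mem_toFinset.2 hu, rfl⟩, hEq⟩
    · rintro ⟨j, a, ⟨u, hu, rfl⟩, hEq⟩
      exact ⟨j, -u, ⟨u, hfin.mem_toFinset.1 hu, rfl⟩, hEq⟩
  have hncard2 : (nbhdIn (torus m (k+1)) A (Eclass m (k+1) (p-1))).ncard
      = (Finset.univ.biUnion
          (fun j : Fin (k+1) => F'.image (· + Pi.single j (1 : ZMod m)))).card := by
    calc (nbhdIn (torus m (k+1)) A (Eclass m (k+1) (p-1))).ncard
        = ((fun v : Fin (k+1) → ZMod m => -v) ''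
            (nbhdIn (torus m (k+1)) A (Eclass m (k+1) (p-1)))).ncard :=
          (Set.ncard_image_of_injective _ neg_injective).symm
      _ = _ := by rw [hchar2, hsetneg, hset2, Set.ncard_coe_finset]
  have e1 : k + 1 - 1 = k := by omega
  have e2 : ((k+1:ℕ):ℝ) = (k:ℝ) + 1 := by push_cast; ring
  constructor
  · rw [hncard1, hncard, e1, e2]
    exact hplus
  · rw [hncard2, hncard, e1, e2]
    rw [← hcardF']
    exact hminus
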